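/- Let M be a topological space, ≪ a binary relation on M with open pasts and open futures, and μ a finite Borel measure on M with full support (μ(W) > 0 for every nonempty open W). Let (Uₙ)_{n ∈ ℕ} be a decreasing sequence of TIPs, and for each n set νₙ := inf{μ(V) : V is a TIP and V ⊆ Uₙ}. Suppose that limₙ μ(Uₙ) = limₙ νₙ (both limits exist since μ(Uₙ) is non-increasing and νₙ is non-decreasing and bounded). If W := interior(⋂ₙ Uₙ) is a TIP, then W is a minimal TIP. -/

import Mathlib

open Set Filter Topology MeasureTheory

/-- The chronological past of a set `A` with respect to relation `r`. -/
def chronPast {M : Type*} (r : M → M → Prop) (A : Set M) : Set M :=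
  {x | ∃ y ∈ A, r x y}

/-- The chronological future of a set `A` with respect to relation `r`. -/
def chronFut {M : Type*} (r : M → M → Prop) (A : Set M) : Set M :=
  {x | ∃ y ∈ A, r y x}

/-- A past set: `I⁻(U) = U`. -/
def IsPastSet {M : Type*} (r : M → M → Prop) (U : Set M) : Prop :=
  chronPast r U = U

/-- A future set: `I⁺(U) = U`. -/
def IsFutureSet {M : Type*} (r : M → M → Prop) (U : Set M) : Prop :=
  chronFut r U = U

/-- An indecomposable past set (IP): a nonempty past set that is not the union of
two past sets, each a proper subset of it. -/
def IsIP {M : Type*} (r : M → M → Prop) (U : Set M) : Prop :=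
  U.Nonempty ∧ IsPastSet r U ∧
    ¬ ∃ A B : Set M, IsPastSet r A ∧ IsPastSet r B ∧ A ⊂ U ∧ B ⊂ U ∧ A ∪ B = U

/-- An indecomposable future set (IF). -/
def IsIF {M : Type*} (r : M → M → Prop) (U : Set M) : Prop :=
  U.Nonempty ∧ IsFutureSet r U ∧
    ¬ ∃ A B : Set M, IsFutureSet r A ∧ IsFutureSet r B ∧ A ⊂ U ∧ B ⊂ U ∧ A ∪ B = U

/-- A terminal indecomposable past set (TIP): an IP not of the form `I⁻(p)`. -/
def IsTIP {M : Type*} (r : M → M → Prop) (U : Set M) : Prop :=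
  IsIP r U ∧ ∀ p : M, U ≠ chronPast r {p}

/-- A terminal indecomposable future set (TIF): an IF not of the form `I⁺(p)`. -/
def IsTIF {M : Type*} (r : M → M → Prop) (U : Set M) : Prop :=
  IsIF r U ∧ ∀ p : M, U ≠ chronFut r {p}

/-- A minimal TIP: a TIP containing no TIP as a proper subset. -/
def IsMinTIP {M : Type*} (r : M → M → Prop) (U : Set M) : Prop :=
  IsTIP r U ∧ ∀ V : Set M, IsTIP r V → V ⊆ U → V = U


lemma pastSet_isOpen {M : Type*} [TopologicalSpace M] (r : M → M → Prop)
    (h : ∀ p : M, IsOpen (chronPast r {p})) {V : Set M} (hV : IsPastSet r V) :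
    IsOpen V := by
  rw [← hV]
  have : chronPast r V = ⋃ y ∈ V, chronPast r {y} := by
    ext x; simp [chronPast]
  rw [this]
  exact isOpen_biUnion fun y _ => h y

/-- If `(Uₙ)` is a decreasing sequence of TIPs such that `μ(Uₙ)` and
`νₙ := inf{μ(V) : V a TIP, V ⊆ Uₙ}` converge to the same limit, and the interior of
`⋂ₙ Uₙ` is a TIP, then it is a minimal TIP. -/
theorem stmt_8 {M : Type*} [TopologicalSpace M] [MeasurableSpace M] [BorelSpace M]
    (r : M → M → Prop)
    (hOpenPast : ∀ p : M, IsOpen (chronPast r {p}))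
    (hOpenFut : ∀ p : M, IsOpen (chronFut r {p}))
    (μ : Measure M) [IsFiniteMeasure μ]
    (hfull : ∀ W : Set M, IsOpen W → W.Nonempty → 0 < μ W)
    (U : ℕ → Set M) (hU : ∀ n, IsTIP r (U n))
    (hdec : ∀ n, U (n + 1) ⊆ U n)
    (ν : ℕ → ENNReal)
    (hν : ∀ n, ν n = sInf ((fun V : Set M => μ V) '' {V | IsTIP r V ∧ V ⊆ U n}))
    (L : ENNReal)
    (hlimU : Filter.Tendsto (fun n => μ (U n)) Filter.atTop (nhds L))
    (hlimν : Filter.Tendsto ν Filter.atTop (nhds L))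
    (hW : IsTIP r (interior (⋂ n, U n))) :
    IsMinTIP r (interior (⋂ n, U n)) := by
  set W := interior (⋂ n, U n) with hWdef
  refine ⟨hW, fun V hV hVW => ?_⟩
  have hWUn : ∀ n, W ⊆ U n := fun n =>
    (interior_subset).trans (Set.iInter_subset U n)
  have hVopen : IsOpen V := pastSet_isOpen r hOpenPast hV.1.2.1
  -- μ V ≥ L
  have hLV : L ≤ μ V := by
    refine le_of_tendsto hlimν (Filter.Eventually.of_forall fun n => ?_)
    rw [hν n]
    exact csInf_le (OrderBot.bddBelow _) ⟨V, ⟨hV, hVW.trans (hWUn n)⟩, rfl⟩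
  -- μ W ≤ L
  have hWL : μ W ≤ L := by
    refine ge_of_tendsto hlimU (Filter.Eventually.of_forall fun n => ?_)
    exact measure_mono (hWUn n)
  -- μ (W \ V) = 0
  have hdiff : μ (W \ V) = 0 := by
    have h1 : μ (W \ V) = μ W - μ V :=
      measure_diff hVW hVopen.measurableSet.nullMeasurableSet (measure_ne_top μ V)
    rw [h1]
    exact tsub_eq_zero_of_le (hWL.trans hLV)
  -- show W ⊆ V
  have hWV : W ⊆ V := by
    intro x hx
    by_contra hxV
    have hxW' : x ∈ chronPast r W := by rw [hW.1.2.1]; exact hx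
    obtain ⟨y, hyW, hxy⟩ := hxW'
    set S := chronFut r {x} ∩ W with hS
    have hSopen : IsOpen S := (hOpenFut x).inter (pastSet_isOpen r hOpenPast hW.1.2.1)
    have hSne : S.Nonempty := ⟨y, ⟨x, rfl, hxy⟩, hyW⟩
    have hSsub : S ⊆ W \ V := by
      rintro z ⟨⟨w, hw, hz⟩, hzW⟩
      refine ⟨hzW, fun hzV => hxV ?_⟩
      have hwx : w = x := hw
      rw [hwx] at hz
      have : x ∈ chronPast r V := ⟨z, hzV, hz⟩
      rwa [hV.1.2.1] at this
    exact (hfull S hSopen hSne).ne' (le_antisymm ((measure_mono hSsub).trans_eq hdiff) zero_le)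
  exact Set.Subset.antisymm hVW hWV
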